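/- Let G = (V,E) be a countable, connected, simple graph in which every vertex has finite degree. The simple random walk on G is transient if and only if there exist real numbers (u(x,y))_{x,y∈V} such that: (i) u(y,x) = -u(x,y) for all x,y, and u(x,y) ≠ 0 only if {x,y} ∈ E; (ii) ∑_{x∈V} |∑_{y∈V} u(x,y)| < ∞ and ∑_{x∈V} (∑_{y∈V} u(x,y)) ≠ 0; (iii) ∑_{x∈V} ∑_{y∈V} u(x,y)^2 < ∞. -/

import Mathlib

set_option linter.unusedSectionVars false


/-- `t`-step return/transition probabilities of the simple random walk on a locally finite
graph `G` : at each step the walker moves to a uniformly chosen neighbour of the current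
vertex (and stays put at an isolated vertex). -/
noncomputable def srwP {V : Type} (G : SimpleGraph V) [DecidableEq V]
    [∀ v, Fintype (G.neighborSet v)] : ℕ → V → V → ℝ
  | 0, x, y => if x = y then 1 else 0
  | n+1, x, y =>
      if G.degree x = 0 then srwP G n x y
      else (∑ z ∈ G.neighborFinset x, srwP G n z y) / G.degree x

namespace LyonsAux
open Finset

variable {V : Type} [DecidableEq V] (G : SimpleGraph V) [∀ v, Fintype (G.neighborSet v)]
  [DecidableRel G.Adj]

lemma srwP_nonneg : ∀ (t : ℕ) (x y : V), 0 ≤ srwP G t x y := by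
  intro t
  induction t with
  | zero => intro x y; simp [srwP]; positivity
  | succ n ih =>
      intro x y
      simp only [srwP]
      split
      · exact ih x y
      · exact div_nonneg (Finset.sum_nonneg fun z _ => ih z y) (by positivity)

lemma srwP_succ_of_pos {x : V} (hx : 0 < G.degree x) (t : ℕ) (y : V) :
    srwP G (t+1) x y = (∑ z ∈ G.neighborFinset x, srwP G t z y) / G.degree x := by
  simp only [srwP, Nat.pos_iff_ne_zero.mp hx, if_false]

lemma srwP_zero (x y : V) : srwP G 0 x y = if x = y then 1 else 0 := rfl

/-- the truncated Green function `∑_{t<N} p_t(x,o)`. -/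
noncomputable def gN (o : V) (N : ℕ) (x : V) : ℝ := ∑ t ∈ Finset.range N, srwP G t x o

lemma gN_nonneg (o : V) (N : ℕ) (x : V) : 0 ≤ gN G o N x :=
  Finset.sum_nonneg fun t _ => srwP_nonneg G t x o

lemma gN_mono (o : V) {N M : ℕ} (h : N ≤ M) (x : V) : gN G o N x ≤ gN G o M x :=
  Finset.sum_le_sum_of_subset_of_nonneg (Finset.range_subset_range.2 h)
    (fun t _ _ => srwP_nonneg G t x o)

/-- balls around `o` as finsets -/
def ball (o : V) : ℕ → Finset V
  | 0 => {o}
  | N+1 => (ball o N).biUnion (fun z => insert z (G.neighborFinset z))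

lemma ball_subset_succ (o : V) (N : ℕ) : ball G o N ⊆ ball G o (N+1) := by
  intro x hx
  exact Finset.mem_biUnion.2 ⟨x, hx, Finset.mem_insert_self _ _⟩

lemma ball_mono (o : V) {N M : ℕ} (h : N ≤ M) : ball G o N ⊆ ball G o M := by
  induction h with
  | refl => exact Finset.Subset.refl _
  | step _ ih => exact ih.trans (ball_subset_succ G o _)

lemma mem_ball_self (o : V) (N : ℕ) : o ∈ ball G o N :=
  ball_mono G o (Nat.zero_le N) (by simp [ball])

lemma adj_mem_ball {o x y : V} {N : ℕ} (hx : x ∈ ball G o N) (hxy : G.Adj x y) :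
    y ∈ ball G o (N+1) :=
  Finset.mem_biUnion.2 ⟨x, hx, Finset.mem_insert_of_mem (by simpa using hxy)⟩

lemma srwP_support {o : V} : ∀ {t : ℕ} {x : V}, srwP G t x o ≠ 0 → x ∈ ball G o t := by
  intro t
  induction t with
  | zero =>
      intro x hx
      simp only [srwP] at hx
      by_cases h : x = o
      · simp [ball, h]
      · simp [h] at hx
  | succ n ih =>
      intro x hx
      simp only [srwP] at hx
      split at hx
      · exact ball_subset_succ G o n (ih hx)
      · have : ∑ z ∈ G.neighborFinset x, srwP G n z o ≠ 0 := by
          intro h0; rw [h0] at hx; simp at hx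
        obtain ⟨z, hz, hz0⟩ := Finset.exists_ne_zero_of_sum_ne_zero this
        have hzx : G.Adj z x := ((G.mem_neighborFinset x z).1 hz).symm
        exact adj_mem_ball G (ih hz0) hzx

lemma gN_support {o x : V} {N : ℕ} (h : gN G o N x ≠ 0) : x ∈ ball G o N := by
  obtain ⟨t, ht, ht0⟩ := Finset.exists_ne_zero_of_sum_ne_zero h
  exact ball_mono G o (Finset.mem_range.1 ht).le (srwP_support G ht0)



/-- Lemma A: the recursion for the truncated Green function. -/
lemma gN_recursion {x : V} (hx : 0 < G.degree x) (o : V) (N : ℕ) :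
    ∑ y ∈ G.neighborFinset x, gN G o N y
      = (G.degree x : ℝ) * (gN G o (N+1) x - if x = o then 1 else 0) := by
  have hdx : (G.degree x : ℝ) ≠ 0 := by positivity
  have h1 : ∀ t, ∑ y ∈ G.neighborFinset x, srwP G t y o
      = (G.degree x : ℝ) * srwP G (t+1) x o := by
    intro t
    rw [srwP_succ_of_pos G hx]
    field_simp
  unfold gN
  rw [Finset.sum_comm]
  simp only [h1]
  rw [← Finset.mul_sum]
  congr 1
  have : ∑ t ∈ Finset.range N, srwP G (t+1) x o
      = ∑ t ∈ Finset.range (N+1), srwP G t x o - srwP G 0 x o := by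
    rw [Finset.sum_range_succ']
    ring
  rw [this, srwP_zero]

/-- Lemma B: the energy bound for the truncated Green function. -/
lemma energy_bound (hdeg : ∀ x : V, 0 < G.degree x) (o : V) (N : ℕ) (F : Finset (V × V)) :
    ∑ p ∈ F, (if G.Adj p.1 p.2 then gN G o N p.1 - gN G o N p.2 else 0)^2
      ≤ 2 * G.degree o * gN G o N o := by
  set g : V → ℝ := gN G o N with hg
  set g' : V → ℝ := gN G o (N+1) with hg'
  set W : Finset V := ball G o (N+1) with hW
  set P : Finset (V × V) := (W ×ˢ W).filter (fun p => G.Adj p.1 p.2) with hP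
  set f : V × V → ℝ := fun p => (if G.Adj p.1 p.2 then g p.1 - g p.2 else 0)^2 with hf
  have hfnn : ∀ p, 0 ≤ f p := fun p => sq_nonneg _
  -- nonzero terms live in P
  have hsupp : ∀ p : V × V, f p ≠ 0 → p ∈ P := by
    rintro ⟨x, y⟩ hp
    have hadj : G.Adj x y := by
      by_contra h; simp [hf, h] at hp
    have hne : g x ≠ 0 ∨ g y ≠ 0 := by
      by_contra h
      push_neg at h
      simp [hf, h.1, h.2] at hp
    have hxy : x ∈ W ∧ y ∈ W := by
      rcases hne with h | h
      · have hx := gN_support G h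
        exact ⟨ball_mono G o (Nat.le_succ N) hx, adj_mem_ball G hx hadj⟩
      · have hy := gN_support G h
        exact ⟨adj_mem_ball G hy hadj.symm, ball_mono G o (Nat.le_succ N) hy⟩
    exact Finset.mem_filter.2 ⟨Finset.mem_product.2 ⟨hxy.1, hxy.2⟩, hadj⟩
  have step1 : ∑ p ∈ F, f p ≤ ∑ p ∈ P, f p := by
    calc ∑ p ∈ F, f p = ∑ p ∈ F ∩ P, f p := by
          apply (Finset.sum_subset (Finset.inter_subset_left)
            (fun p _ hp => ?_)).symm
          by_contra h
          exact hp (Finset.mem_inter.2 ⟨‹p ∈ F›, hsupp p h⟩)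
      _ ≤ ∑ p ∈ P, f p :=
          Finset.sum_le_sum_of_subset_of_nonneg Finset.inter_subset_right
            (fun p _ _ => hfnn p)
  -- P is swap-invariant
  have hPswap : ∀ p : V × V, p ∈ P → p.swap ∈ P := by
    rintro ⟨x, y⟩ hp
    rw [hP, Finset.mem_filter, Finset.mem_product] at hp ⊢
    exact ⟨⟨hp.1.2, hp.1.1⟩, hp.2.symm⟩
  -- symmetrization: ∑_P (gx - gy)^2 = 2 ∑_P gx(gx - gy)
  have hswap : ∀ (φ : V → V → ℝ), ∑ p ∈ P, φ p.1 p.2 = ∑ p ∈ P, φ p.2 p.1 := by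
    intro φ
    apply Finset.sum_nbij' (fun p => Prod.swap p) (fun p => Prod.swap p)
    · exact hPswap
    · exact fun p hp => hPswap p hp
    · intro p _; simp
    · intro p _; simp
    · intro p _; simp
  have step2 : ∑ p ∈ P, f p = 2 * ∑ p ∈ P, g p.1 * (g p.1 - g p.2) := by
    have e1 : ∑ p ∈ P, f p
        = ∑ p ∈ P, ((g p.1 - g p.2) * g p.1 - (g p.1 - g p.2) * g p.2) := by
      apply Finset.sum_congr rfl
      rintro ⟨x, y⟩ hp
      have hadj : G.Adj x y := (Finset.mem_filter.1 hp).2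
      simp only [hf, if_pos hadj]
      ring
    rw [e1, Finset.sum_sub_distrib]
    have e2 : ∑ p ∈ P, (g p.1 - g p.2) * g p.2
        = ∑ p ∈ P, (g p.2 - g p.1) * g p.1 := hswap (fun a b => (g a - g b) * g b)
    rw [e2]
    rw [← Finset.sum_sub_distrib, Finset.mul_sum]
    apply Finset.sum_congr rfl
    intro p _
    ring
  -- rewrite P-sum as double sum
  have step3 : ∑ p ∈ P, g p.1 * (g p.1 - g p.2)
      = ∑ x ∈ W, ∑ y ∈ W.filter (fun y => G.Adj x y), g x * (g x - g y) := by
    rw [hP, Finset.sum_filter, Finset.sum_product]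
    apply Finset.sum_congr rfl
    intro x _
    rw [Finset.sum_filter]
  -- inner sum bound
  have step4 : ∀ x ∈ W, ∑ y ∈ W.filter (fun y => G.Adj x y), g x * (g x - g y)
      ≤ g x * G.degree x * (if x = o then 1 else 0) := by
    intro x _
    by_cases hgx : g x = 0
    · simp only [hgx, zero_mul, mul_zero]
      simp
    · have hxball : x ∈ ball G o N := gN_support G hgx
      have hNx : W.filter (fun y => G.Adj x y) = G.neighborFinset x := by
        ext y
        simp only [Finset.mem_filter, SimpleGraph.mem_neighborFinset]
        constructor
        · exact fun h => h.2
        · exact fun h => ⟨adj_mem_ball G hxball h, h⟩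
      rw [hNx, ← Finset.mul_sum, Finset.sum_sub_distrib, Finset.sum_const,
        SimpleGraph.card_neighborFinset_eq_degree, nsmul_eq_mul,
        gN_recursion G (hdeg x) o N]
      have hgpos : 0 < g x := lt_of_le_of_ne (gN_nonneg G o N x) (Ne.symm hgx)
      have hkey : (G.degree x : ℝ) * g x - (G.degree x : ℝ) * (g' x - if x = o then 1 else 0)
          ≤ (G.degree x : ℝ) * (if x = o then 1 else 0) := by
        have hmono : g x ≤ g' x := gN_mono G o (Nat.le_succ N) x
        have hd : (0:ℝ) ≤ G.degree x := by positivity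
        nlinarith
      calc g x * ((G.degree x : ℝ) * g x - (G.degree x : ℝ) * (g' x - if x = o then 1 else 0))
          ≤ g x * ((G.degree x : ℝ) * (if x = o then 1 else 0)) := by
            exact mul_le_mul_of_nonneg_left hkey hgpos.le
        _ = g x * G.degree x * (if x = o then 1 else 0) := by ring
  have step5 : ∑ x ∈ W, g x * (G.degree x : ℝ) * (if x = o then 1 else 0)
      = g o * G.degree o := by
    rw [Finset.sum_eq_single o]
    · simp
    · intro b _ hb; simp [hb]
    · intro h; exact absurd (mem_ball_self G o (N+1)) h
  calc ∑ p ∈ F, f p ≤ ∑ p ∈ P, f p := step1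
    _ = 2 * ∑ p ∈ P, g p.1 * (g p.1 - g p.2) := step2
    _ ≤ 2 * (g o * G.degree o) := by
        rw [step3]
        have := Finset.sum_le_sum step4
        linarith [this.trans_eq step5]
    _ = 2 * G.degree o * gN G o N o := by rw [hg]; ring



lemma degree_pos_of_adj {x y : V} (h : G.Adj x y) : 0 < G.degree x := by
  rw [← SimpleGraph.card_neighborFinset_eq_degree]
  exact Finset.card_pos.2 ⟨y, (G.mem_neighborFinset x y).2 h⟩

/-- comparison along a walk: `p_t(x,o) ≤ C p_{t+m}(a,o)`. -/
lemma srwP_le_of_walk {a x : V} (w : G.Walk a x) (o : V) :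
    ∃ C : ℝ, 0 < C ∧ ∀ t, srwP G t x o ≤ C * srwP G (t + w.length) a o := by
  induction w with
  | nil => exact ⟨1, one_pos, fun t => by simp⟩
  | @cons a b x h w ih =>
      obtain ⟨C, hC, hle⟩ := ih
      have hda : 0 < G.degree a := degree_pos_of_adj G h
      refine ⟨C * G.degree a, by positivity, fun t => ?_⟩
      have h1 : srwP G (t + w.length) b o ≤ G.degree a * srwP G (t + w.length + 1) a o := by
        rw [srwP_succ_of_pos G hda,
          mul_div_cancel₀ _ (by positivity : (G.degree a : ℝ) ≠ 0)]
        exact Finset.single_le_sum (fun z _ => srwP_nonneg G _ z o)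
          ((G.mem_neighborFinset a b).2 h)
      calc srwP G t x o ≤ C * srwP G (t + w.length) b o := hle t
        _ ≤ C * (G.degree a * srwP G (t + w.length + 1) a o) :=
            mul_le_mul_of_nonneg_left h1 hC.le
        _ = C * G.degree a * srwP G (t + (SimpleGraph.Walk.cons h w).length) a o := by
            rw [SimpleGraph.Walk.length_cons]
            ring_nf
  
/-- summability transfers from the base point along walks. -/
lemma summable_srwP_of_summable {o x : V} (hconn : G.Connected)
    (ho : Summable fun t => srwP G t o o) : Summable fun t => srwP G t x o := by
  obtain ⟨w⟩ := (hconn x o : G.Reachable x o)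
  obtain ⟨C, hC, hle⟩ := srwP_le_of_walk G w.reverse o
  have h1 : Summable fun t => C * srwP G (t + w.reverse.length) o o :=
    (((summable_nat_add_iff w.reverse.length).2 ho)).mul_left C
  exact h1.of_nonneg_of_le (fun t => srwP_nonneg G t x o) (fun t => hle t)

/-- forward equation -/
lemma srwP_forward (hdeg : ∀ x : V, 0 < G.degree x) :
    ∀ (t : ℕ) (x y : V), srwP G (t+1) x y
      = ∑ z ∈ G.neighborFinset y, srwP G t x z / G.degree z := by
  intro t
  induction t with
  | zero =>
      intro x y
      rw [srwP_succ_of_pos G (hdeg x)]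
      simp only [srwP_zero]
      have l1 : ∑ z ∈ G.neighborFinset x, (if z = y then (1:ℝ) else 0)
          = if y ∈ G.neighborFinset x then 1 else 0 := Finset.sum_ite_eq' _ _ _
      have l2 : ∀ z : V, (if x = z then (1:ℝ) else 0) / G.degree z
          = if x = z then ((G.degree x : ℝ))⁻¹ else 0 := by
        intro z
        by_cases h : x = z
        · subst h; simp
        · simp [h]
      rw [l1]
      simp only [l2]
      rw [Finset.sum_ite_eq]
      by_cases h : G.Adj x y
      · have h1 : y ∈ G.neighborFinset x := by simpa using h
        have h2 : x ∈ G.neighborFinset y := by simpa using h.symm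
        simp [h1, h2]
      · have h1 : y ∉ G.neighborFinset x := by simpa using h
        have h2 : x ∉ G.neighborFinset y := by
          simpa using (fun hyx : G.Adj y x => h hyx.symm)
        simp [h1, h2]
  | succ n ih =>
      intro x y
      rw [srwP_succ_of_pos G (hdeg x)]
      have hcongr : ∀ w ∈ G.neighborFinset x, srwP G (n+1) w y
          = ∑ z ∈ G.neighborFinset y, srwP G n w z / G.degree z := fun w _ => ih w y
      rw [Finset.sum_congr rfl hcongr, Finset.sum_comm, Finset.sum_div]
      apply Finset.sum_congr rfl
      intro z _
      rw [srwP_succ_of_pos G (hdeg x), ← Finset.sum_div, div_div, div_div, mul_comm]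

/-- reversibility -/
lemma srwP_reversible (hdeg : ∀ x : V, 0 < G.degree x) :
    ∀ (t : ℕ) (x y : V), (G.degree x : ℝ) * srwP G t x y = G.degree y * srwP G t y x := by
  intro t
  induction t with
  | zero =>
      intro x y
      by_cases h : x = y
      · subst h; rfl
      · simp [srwP_zero, h, Ne.symm h]
  | succ n ih =>
      intro x y
      have hdy : (G.degree y : ℝ) ≠ 0 := by have := hdeg y; positivity
      rw [srwP_forward G hdeg n x y, srwP_succ_of_pos G (hdeg y),
        mul_div_cancel₀ _ hdy, Finset.mul_sum]
      apply Finset.sum_congr rfl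
      intro z hz
      have hdz : (G.degree z : ℝ) ≠ 0 := by have := hdeg z; positivity
      have hrev := ih x z
      field_simp
      linarith [mul_comm (srwP G n z x) ((G.degree z : ℝ))]

lemma deg_pos_of_summable {x : V} (hx : Summable fun t => srwP G t x x) :
    0 < G.degree x := by
  by_contra h
  push_neg at h
  have h0 : G.degree x = 0 := Nat.le_zero.1 h
  have hconst : ∀ t, srwP G t x x = 1 := by
    intro t
    induction t with
    | zero => simp [srwP_zero]
    | succ n ih => simp only [srwP, h0, if_pos]; exact ih
  have := hx.tendsto_atTop_zero
  simp only [hconst] at this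
  exact absurd (tendsto_nhds_unique this tendsto_const_nhds) (by norm_num)

lemma g_recursion (hconn : G.Connected) {o : V}
    (ho : Summable fun t => srwP G t o o) (hdeg : ∀ x : V, 0 < G.degree x) (x : V) :
    ∑ y ∈ G.neighborFinset x, (∑' t, srwP G t y o)
      = (G.degree x : ℝ) * ((∑' t, srwP G t x o) - if x = o then 1 else 0) := by
  have hs : ∀ y : V, Summable fun t => srwP G t y o :=
    fun y => summable_srwP_of_summable G hconn ho
  rw [← Summable.tsum_finsetSum (fun y _ => hs y)]
  have h1 : ∀ t : ℕ, ∑ y ∈ G.neighborFinset x, srwP G t y o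
      = (G.degree x : ℝ) * srwP G (t+1) x o := by
    intro t
    rw [srwP_succ_of_pos G (hdeg x),
      mul_div_cancel₀ _ (by have := hdeg x; positivity : (G.degree x : ℝ) ≠ 0)]
  simp only [h1]
  rw [tsum_mul_left]
  congr 1
  have h2 := Summable.tsum_eq_zero_add (hs x)
  rw [srwP_zero] at h2
  rw [h2]
  ring

/-- The forward direction: transience gives a finite-energy flow. -/
lemma forward (hconn : G.Connected) (h : ∀ o : V, Summable fun t => srwP G t o o) :
    ∃ u : V → V → ℝ,
      ((∀ x y, u y x = -u x y) ∧ (∀ x y, u x y ≠ 0 → G.Adj x y)) ∧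
      (Summable (fun x => ∑' y, u x y) ∧ (∑' x, ∑' y, u x y) ≠ 0) ∧
      Summable (fun p : V × V => (u p.1 p.2) ^ 2) := by
  obtain ⟨o⟩ := hconn.nonempty
  have hdeg : ∀ x : V, 0 < G.degree x := fun x => deg_pos_of_summable G (h x)
  have hs : ∀ y : V, Summable fun t => srwP G t y o :=
    fun y => summable_srwP_of_summable G hconn (h o)
  set g : V → ℝ := fun x => ∑' t, srwP G t x o with hgdef
  set u : V → V → ℝ := fun x y => if G.Adj x y then g x - g y else 0 with hudef
  have hdiv : ∀ x : V, (∑' y, u x y) = if x = o then (G.degree o : ℝ) else 0 := by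
    intro x
    rw [tsum_eq_sum (s := G.neighborFinset x)
      (fun y hy => if_neg (fun hadj => hy ((G.mem_neighborFinset x y).2 hadj)))]
    have hterm : ∀ y ∈ G.neighborFinset x, u x y = g x - g y :=
      fun y hy => if_pos ((G.mem_neighborFinset x y).1 hy)
    rw [Finset.sum_congr rfl hterm, Finset.sum_sub_distrib, Finset.sum_const,
      SimpleGraph.card_neighborFinset_eq_degree, nsmul_eq_mul,
      g_recursion G hconn (h o) hdeg x]
    by_cases hx : x = o
    · subst hx; simp only [hgdef, if_pos rfl, if_true]; ring
    · simp [hx, hgdef]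
  refine ⟨u, ⟨?_, ?_⟩, ⟨?_, ?_⟩, ?_⟩
  · intro x y
    by_cases hxy : G.Adj x y
    · simp only [hudef, if_pos hxy, if_pos hxy.symm]; ring
    · simp only [hudef, if_neg hxy, if_neg (fun hyx : G.Adj y x => hxy hyx.symm)]; ring
  · intro x y hne
    by_contra hxy
    simp only [hudef, if_neg hxy] at hne
    exact hne rfl
  · exact summable_of_ne_finset_zero (s := {o})
      (fun x hx => by rw [hdiv x, if_neg (by simpa using hx)])
  · simp only [hdiv]
    rw [tsum_eq_sum (s := {o}) (fun x hx => if_neg (by simpa using hx))]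
    simp only [Finset.sum_singleton, if_pos rfl]
    have h0 := hdeg o
    exact_mod_cast h0.ne'
  · apply summable_of_sum_le (fun p => sq_nonneg _)
    intro F
    have hbound : ∀ N : ℕ,
        ∑ p ∈ F, (if G.Adj p.1 p.2 then gN G o N p.1 - gN G o N p.2 else 0)^2
          ≤ 2 * G.degree o * g o := by
      intro N
      refine (energy_bound G hdeg o N F).trans ?_
      have h1 : gN G o N o ≤ g o :=
        Summable.sum_le_tsum _ (fun t _ => srwP_nonneg G t o o) (hs o)
      have := hdeg o
      nlinarith [gN_nonneg G o N o]
    have htend : Filter.Tendsto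
        (fun N => ∑ p ∈ F, (if G.Adj p.1 p.2 then gN G o N p.1 - gN G o N p.2 else 0)^2)
        Filter.atTop
        (nhds (∑ p ∈ F, (u p.1 p.2)^2)) := by
      apply tendsto_finset_sum
      intro p _
      by_cases hadj : G.Adj p.1 p.2
      · simp only [hudef, if_pos hadj]
        exact (((hs p.1).hasSum.tendsto_sum_nat).sub
          ((hs p.2).hasSum.tendsto_sum_nat)).pow 2
      · simp only [hudef, if_neg hadj]
        simpa using (tendsto_const_nhds : Filter.Tendsto (fun _ : ℕ => (0:ℝ)^2) _ _)
    exact le_of_tendsto htend (Filter.Eventually.of_forall hbound)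


lemma sum_swap_adj (A : Finset V) (φ : V → V → ℝ) :
    ∑ p ∈ (A ×ˢ A).filter (fun p => G.Adj p.1 p.2), φ p.1 p.2
      = ∑ p ∈ (A ×ˢ A).filter (fun p => G.Adj p.1 p.2), φ p.2 p.1 := by
  have hPswap : ∀ p : V × V, p ∈ (A ×ˢ A).filter (fun p => G.Adj p.1 p.2) →
      p.swap ∈ (A ×ˢ A).filter (fun p => G.Adj p.1 p.2) := by
    rintro ⟨x, y⟩ hp
    rw [Finset.mem_filter, Finset.mem_product] at hp ⊢
    exact ⟨⟨hp.1.2, hp.1.1⟩, hp.2.symm⟩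
  apply Finset.sum_nbij' (fun p => Prod.swap p) (fun p => Prod.swap p)
  · exact hPswap
  · exact hPswap
  · intro p _; simp
  · intro p _; simp
  · intro p _; simp

/-- summation by parts plus Cauchy–Schwarz: the square of the pairing of the divergence
of `u` with a finitely supported `f` is controlled by energy times Dirichlet sum. -/
lemma parts_cs (u : V → V → ℝ) (hanti : ∀ x y, u y x = -u x y)
    (hsupp : ∀ x y, u x y ≠ 0 → G.Adj x y)
    (hE : Summable (fun p : V × V => (u p.1 p.2) ^ 2))
    (f : V → ℝ) (s : Finset V) (hfs : ∀ x ∉ s, f x = 0)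
    (D : ℝ) (hD : ∀ Q : Finset (V × V), (∀ p ∈ Q, G.Adj p.1 p.2) →
      ∑ p ∈ Q, (f p.1 - f p.2) ^ 2 ≤ D) :
    (2 * ∑' x, (∑' y, u x y) * f x) ^ 2 ≤ (∑' p : V × V, (u p.1 p.2) ^ 2) * D := by
  set A : Finset V := s ∪ s.biUnion (fun z => G.neighborFinset z) with hA
  have hsA : s ⊆ A := Finset.subset_union_left
  have hnbr : ∀ x ∈ s, G.neighborFinset x ⊆ A := fun x hx y hy =>
    Finset.mem_union_right _ (Finset.mem_biUnion.2 ⟨x, hx, hy⟩)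
  set Q : Finset (V × V) := (A ×ˢ A).filter (fun p => G.Adj p.1 p.2) with hQ
  have hQadj : ∀ p ∈ Q, G.Adj p.1 p.2 := fun p hp => (Finset.mem_filter.1 hp).2
  have hdiv : ∀ x : V, (∑' y, u x y) = ∑ y ∈ G.neighborFinset x, u x y := by
    intro x
    apply tsum_eq_sum
    intro y hy
    by_contra h0
    exact hy ((G.mem_neighborFinset x y).2 (hsupp x y h0))
  -- the pairing as a finite sum over Q
  have key : ∑' x, (∑' y, u x y) * f x = ∑ p ∈ Q, u p.1 p.2 * f p.1 := by
    rw [tsum_eq_sum (s := A) (fun x hx => by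
      rw [hfs x (fun hxs => hx (hsA hxs)), mul_zero])]
    have e1 : ∀ x ∈ A, (∑' y, u x y) * f x
        = ∑ y ∈ A.filter (fun y => G.Adj x y), u x y * f x := by
      intro x _
      rw [hdiv x, Finset.sum_mul]
      by_cases hfx : f x = 0
      · rw [Finset.sum_eq_zero (fun y _ => by rw [hfx, mul_zero]),
          Finset.sum_eq_zero (fun y _ => by rw [hfx, mul_zero])]
      · have hxs : x ∈ s := by by_contra hxs; exact hfx (hfs x hxs)
        apply Finset.sum_congr _ (fun y _ => rfl)
        ext y
        simp only [Finset.mem_filter, SimpleGraph.mem_neighborFinset]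
        constructor
        · intro hy
          exact ⟨hnbr x hxs ((G.mem_neighborFinset x y).2 hy), hy⟩
        · exact fun hy => hy.2
    rw [Finset.sum_congr rfl e1, hQ, Finset.sum_filter, Finset.sum_product]
    apply Finset.sum_congr rfl
    intro x _
    rw [Finset.sum_filter]
  -- antisymmetrization
  have skew : ∑ p ∈ Q, u p.1 p.2 * f p.1 = - ∑ p ∈ Q, u p.1 p.2 * f p.2 := by
    have := sum_swap_adj G A (fun a b => u a b * f a)
    rw [hQ, this, ← Finset.sum_neg_distrib]
    apply Finset.sum_congr rfl
    rintro ⟨x, y⟩ _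
    simp only
    rw [hanti y x]
    ring
  have key2 : 2 * ∑' x, (∑' y, u x y) * f x = ∑ p ∈ Q, u p.1 p.2 * (f p.1 - f p.2) := by
    rw [key]
    rw [Finset.sum_congr rfl (fun p _ => by ring :
      ∀ p ∈ Q, u p.1 p.2 * (f p.1 - f p.2) = u p.1 p.2 * f p.1 - u p.1 p.2 * f p.2)]
    rw [Finset.sum_sub_distrib]
    nlinarith [skew]
  rw [key2]
  calc (∑ p ∈ Q, u p.1 p.2 * (f p.1 - f p.2)) ^ 2
      ≤ (∑ p ∈ Q, (u p.1 p.2) ^ 2) * ∑ p ∈ Q, (f p.1 - f p.2) ^ 2 :=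
        Finset.sum_mul_sq_le_sq_mul_sq Q _ _
    _ ≤ (∑' p : V × V, (u p.1 p.2) ^ 2) * D := by
        apply mul_le_mul
        · exact Summable.sum_le_tsum Q (fun p _ => sq_nonneg _) hE
        · exact hD Q hQadj
        · exact Finset.sum_nonneg (fun p _ => sq_nonneg _)
        · exact tsum_nonneg (fun p => sq_nonneg _)


/-- recurrence transfers between vertices. -/
lemma not_summable_transfer (hconn : G.Connected) (hdeg : ∀ x : V, 0 < G.degree x)
    {o : V} (ho : ¬ Summable fun t => srwP G t o o) (a : V) :
    ¬ Summable fun t => srwP G t a a := by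
  intro ha
  apply ho
  obtain ⟨w⟩ := (hconn a o : G.Reachable a o)
  obtain ⟨C, hC, hle⟩ := srwP_le_of_walk G w o
  obtain ⟨C', hC', hle'⟩ := srwP_le_of_walk G w a
  have hda : (G.degree a : ℝ) ≠ 0 := by have := hdeg a; positivity
  have hbig : ∀ t, srwP G t o o
      ≤ (C * (G.degree o / G.degree a) * C') * srwP G (t + (w.length + w.length)) a a := by
    intro t
    have h1 : srwP G t o o ≤ C * srwP G (t + w.length) a o := hle t
    have h2 : srwP G (t + w.length) a o
        = (G.degree o / G.degree a) * srwP G (t + w.length) o a := by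
      have := srwP_reversible G hdeg (t + w.length) o a
      field_simp
      linarith
    have h3 : srwP G (t + w.length) o a
        ≤ C' * srwP G (t + w.length + w.length) a a := hle' (t + w.length)
    have hnn : (0:ℝ) ≤ G.degree o / G.degree a := by positivity
    calc srwP G t o o ≤ C * srwP G (t + w.length) a o := h1
      _ = C * ((G.degree o / G.degree a) * srwP G (t + w.length) o a) := by rw [h2]
      _ ≤ C * ((G.degree o / G.degree a) * (C' * srwP G (t + w.length + w.length) a a)) := by
          apply mul_le_mul_of_nonneg_left _ hC.le
          exact mul_le_mul_of_nonneg_left h3 hnn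
      _ = (C * (G.degree o / G.degree a) * C') * srwP G (t + (w.length + w.length)) a a := by
          rw [← add_assoc]; ring
  have hsum : Summable fun t =>
      (C * (G.degree o / G.degree a) * C') * srwP G (t + (w.length + w.length)) a a :=
    (((summable_nat_add_iff (w.length + w.length)).2 ha)).mul_left _
  exact hsum.of_nonneg_of_le (fun t => srwP_nonneg G t o o) hbig

/-- the test function attached to a vertex `a` and a cutoff `N`. -/
noncomputable def testf (a : V) (N : ℕ) (x : V) : ℝ :=
  min (gN G a N x / gN G a N a) 1

lemma testf_nonneg (a : V) (N : ℕ) (x : V) (ha : 0 < gN G a N a) : 0 ≤ testf G a N x :=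
  le_min (div_nonneg (gN_nonneg G a N x) ha.le) one_pos.le

lemma testf_le_one (a : V) (N : ℕ) (x : V) : testf G a N x ≤ 1 := min_le_right _ _

lemma testf_self (a : V) (N : ℕ) (ha : 0 < gN G a N a) : testf G a N a = 1 := by
  rw [testf, div_self ha.ne', min_self]

lemma testf_support {a x : V} {N : ℕ} (h : testf G a N x ≠ 0) : x ∈ ball G a N := by
  apply gN_support G
  intro h0
  rw [testf, h0, zero_div, min_eq_left one_pos.le] at h
  exact h rfl

/-- Dirichlet sum bound for the test function. -/
lemma testf_dirichlet (hdeg : ∀ x : V, 0 < G.degree x) (a : V) (N : ℕ)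
    (ha : 0 < gN G a N a) (Q : Finset (V × V)) (hQ : ∀ p ∈ Q, G.Adj p.1 p.2) :
    ∑ p ∈ Q, (testf G a N p.1 - testf G a N p.2) ^ 2
      ≤ 2 * G.degree a / gN G a N a := by
  have hcontr : ∀ p : V × V, (testf G a N p.1 - testf G a N p.2) ^ 2
      ≤ ((gN G a N p.1 - gN G a N p.2) / gN G a N a) ^ 2 := by
    rintro ⟨x, y⟩
    have h1 : |testf G a N x - testf G a N y|
        ≤ |gN G a N x / gN G a N a - gN G a N y / gN G a N a| := by
      have h2 := abs_min_sub_min_le_max (gN G a N x / gN G a N a) 1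
        (gN G a N y / gN G a N a) 1
      simpa [testf] using h2
    calc (testf G a N x - testf G a N y) ^ 2
        = |testf G a N x - testf G a N y| ^ 2 := (sq_abs _).symm
      _ ≤ |gN G a N x / gN G a N a - gN G a N y / gN G a N a| ^ 2 :=
          pow_le_pow_left₀ (abs_nonneg _) h1 2
      _ = ((gN G a N x - gN G a N y) / gN G a N a) ^ 2 := by
          rw [sq_abs, div_sub_div_same]
  calc ∑ p ∈ Q, (testf G a N p.1 - testf G a N p.2) ^ 2
      ≤ ∑ p ∈ Q, ((gN G a N p.1 - gN G a N p.2) / gN G a N a) ^ 2 :=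
        Finset.sum_le_sum (fun p _ => hcontr p)
    _ = (∑ p ∈ Q, (if G.Adj p.1 p.2 then gN G a N p.1 - gN G a N p.2 else 0) ^ 2)
          / (gN G a N a) ^ 2 := by
        rw [Finset.sum_div]
        exact Finset.sum_congr rfl (fun p hp => by rw [if_pos (hQ p hp), div_pow])
    _ ≤ (2 * G.degree a * gN G a N a) / (gN G a N a) ^ 2 := by
        gcongr
        exact energy_bound G hdeg a N Q
    _ = 2 * G.degree a / gN G a N a := by
        rw [sq]
        field_simp



lemma sup'_sub_sq_le {α : Type} {B : Finset α} (hB : B.Nonempty) (F : α → V → ℝ)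
    (x y : V) :
    (B.sup' hB (fun a => F a x) - B.sup' hB (fun a => F a y)) ^ 2
      ≤ ∑ a ∈ B, (F a x - F a y) ^ 2 := by
  have habs : |B.sup' hB (fun a => F a x) - B.sup' hB (fun a => F a y)|
      ≤ B.sup' hB (fun a => |F a x - F a y|) := by
    rw [abs_sub_le_iff]
    constructor
    · rw [sub_le_iff_le_add]
      apply Finset.sup'_le
      intro a ha
      calc F a x ≤ |F a x - F a y| + F a y := by
            have := le_abs_self (F a x - F a y); linarith
        _ ≤ B.sup' hB (fun a => |F a x - F a y|) + B.sup' hB (fun a => F a y) :=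
            add_le_add (Finset.le_sup' (fun a => |F a x - F a y|) ha)
              (Finset.le_sup' (fun a => F a y) ha)
    · rw [sub_le_iff_le_add]
      apply Finset.sup'_le
      intro a ha
      calc F a y ≤ |F a x - F a y| + F a x := by
            have := neg_abs_le (F a x - F a y); linarith
        _ ≤ B.sup' hB (fun a => |F a x - F a y|) + B.sup' hB (fun a => F a x) :=
            add_le_add (Finset.le_sup' (fun a => |F a x - F a y|) ha)
              (Finset.le_sup' (fun a => F a x) ha)
  obtain ⟨a₀, ha₀, hval⟩ := Finset.exists_mem_eq_sup' hB (fun a => |F a x - F a y|)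
  calc (B.sup' hB (fun a => F a x) - B.sup' hB (fun a => F a y)) ^ 2
      = |B.sup' hB (fun a => F a x) - B.sup' hB (fun a => F a y)| ^ 2 := (sq_abs _).symm
    _ ≤ (B.sup' hB (fun a => |F a x - F a y|)) ^ 2 := by
        apply pow_le_pow_left₀ (abs_nonneg _) habs
    _ = (F a₀ x - F a₀ y) ^ 2 := by rw [hval, sq_abs]
    _ ≤ ∑ a ∈ B, (F a x - F a y) ^ 2 :=
        Finset.single_le_sum (f := fun a => (F a x - F a y) ^ 2)
          (fun a _ => sq_nonneg _) ha₀

/-- The backward direction: a finite energy flow forces transience. -/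
lemma backward [Countable V] (hconn : G.Connected) (u : V → V → ℝ)
    (hanti : ∀ x y, u y x = -u x y) (hsupp : ∀ x y, u x y ≠ 0 → G.Adj x y)
    (hdivsum : Summable (fun x => ∑' y, u x y)) (hL : (∑' x, ∑' y, u x y) ≠ 0)
    (hE : Summable (fun p : V × V => (u p.1 p.2) ^ 2)) :
    ∀ o : V, Summable fun t => srwP G t o o := by
  intro o
  by_contra ho
  -- all degrees are positive
  have hdeg : ∀ x : V, 0 < G.degree x := by
    by_contra hx
    push_neg at hx
    obtain ⟨x, hx0⟩ := hx
    have hall : ∀ y : V, y = x := by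
      intro y
      obtain ⟨w⟩ := (hconn x y : G.Reachable x y)
      cases w with
      | nil => rfl
      | cons h _ => exact absurd (degree_pos_of_adj G h) (by omega)
    have hzero : ∀ a b : V, u a b = 0 := by
      intro a b
      rw [hall a, hall b]
      have := hanti x x
      linarith
    apply hL
    simp [hzero]
  -- every vertex is recurrent
  have hrec : ∀ a : V, Filter.Tendsto (fun N => gN G a N a) Filter.atTop Filter.atTop :=
    fun a => (not_summable_iff_tendsto_nat_atTop_of_nonneg
      (fun t => srwP_nonneg G t a a)).1 (not_summable_transfer G hconn hdeg ho a)
  haveI : Nonempty V := hconn.nonempty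
  obtain ⟨e, he⟩ := exists_surjective_nat V
  -- choose cutoffs
  have hchoice : ∀ (a : V) (n : ℕ),
      ∃ N, (2 * (G.degree a : ℝ) + 1) * ((n : ℝ) + 1) ^ 2 ≤ gN G a N a :=
    fun a n => ((hrec a).eventually_ge_atTop _).exists
  choose Nc hNc using hchoice
  have hgpos : ∀ (a : V) (n : ℕ), 0 < gN G a (Nc a n) a := by
    intro a n
    refine lt_of_lt_of_le ?_ (hNc a n)
    positivity
  -- the combined test functions
  set An : ℕ → Finset V := fun n => (Finset.range (n+1)).image e with hAn
  have hAnne : ∀ n, (An n).Nonempty :=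
    fun n => ⟨e 0, Finset.mem_image.2 ⟨0, Finset.mem_range.2 (Nat.succ_pos n), rfl⟩⟩
  set f : ℕ → V → ℝ := fun n x => (An n).sup' (hAnne n) (fun a => testf G a (Nc a n) x)
    with hf
  have hf_le_one : ∀ n x, f n x ≤ 1 :=
    fun n x => Finset.sup'_le _ _ (fun a _ => testf_le_one G a _ x)
  have hf_nonneg : ∀ n x, 0 ≤ f n x := by
    intro n x
    refine le_trans (testf_nonneg G (e 0) (Nc (e 0) n) x (hgpos (e 0) n)) ?_
    exact Finset.le_sup' (fun a => testf G a (Nc a n) x)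
      (Finset.mem_image.2 ⟨0, Finset.mem_range.2 (Nat.succ_pos n), rfl⟩)
  have hf_one : ∀ n x, x ∈ An n → f n x = 1 := by
    intro n x hx
    refine le_antisymm (hf_le_one n x) ?_
    calc (1:ℝ) = testf G x (Nc x n) x := (testf_self G x _ (hgpos x n)).symm
      _ ≤ f n x := Finset.le_sup' (fun a => testf G a (Nc a n) x) hx
  -- support
  have hfs : ∀ n, ∀ x ∉ (An n).biUnion (fun a => ball G a (Nc a n)), f n x = 0 := by
    intro n x hx
    have hz : ∀ a ∈ An n, testf G a (Nc a n) x = 0 := by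
      intro a ha
      by_contra h0
      exact hx (Finset.mem_biUnion.2 ⟨a, ha, testf_support G h0⟩)
    rw [hf]
    simp only
    rw [Finset.sup'_congr (hAnne n) rfl hz, Finset.sup'_const]
  -- Dirichlet bound
  have hDir : ∀ n, ∀ Q : Finset (V × V), (∀ p ∈ Q, G.Adj p.1 p.2) →
      ∑ p ∈ Q, (f n p.1 - f n p.2) ^ 2 ≤ 1 / ((n:ℝ) + 1) := by
    intro n Q hQ
    have step1 : ∑ p ∈ Q, (f n p.1 - f n p.2) ^ 2
        ≤ ∑ p ∈ Q, ∑ a ∈ An n, (testf G a (Nc a n) p.1 - testf G a (Nc a n) p.2) ^ 2 :=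
      Finset.sum_le_sum (fun p _ => sup'_sub_sq_le (hAnne n) _ p.1 p.2)
    have step2 : ∑ p ∈ Q, ∑ a ∈ An n, (testf G a (Nc a n) p.1 - testf G a (Nc a n) p.2) ^ 2
        = ∑ a ∈ An n, ∑ p ∈ Q, (testf G a (Nc a n) p.1 - testf G a (Nc a n) p.2) ^ 2 :=
      Finset.sum_comm
    have step3 : ∀ a ∈ An n, ∑ p ∈ Q, (testf G a (Nc a n) p.1 - testf G a (Nc a n) p.2) ^ 2
        ≤ 1 / ((n:ℝ) + 1) ^ 2 := by
      intro a _
      refine (testf_dirichlet G hdeg a (Nc a n) (hgpos a n) Q hQ).trans ?_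
      rw [div_le_div_iff₀ (hgpos a n) (by positivity)]
      nlinarith [hNc a n, hgpos a n, sq_nonneg ((n:ℝ)+1)]
    calc ∑ p ∈ Q, (f n p.1 - f n p.2) ^ 2
        ≤ ∑ a ∈ An n, ∑ p ∈ Q, (testf G a (Nc a n) p.1 - testf G a (Nc a n) p.2) ^ 2 := by
          rw [← step2]; exact step1
      _ ≤ ∑ _a ∈ An n, 1 / ((n:ℝ) + 1) ^ 2 := Finset.sum_le_sum step3
      _ = (An n).card * (1 / ((n:ℝ) + 1) ^ 2) := by rw [Finset.sum_const, nsmul_eq_mul]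
      _ ≤ ((n:ℝ) + 1) * (1 / ((n:ℝ) + 1) ^ 2) := by
          apply mul_le_mul_of_nonneg_right _ (by positivity)
          have h1 : (An n).card ≤ n + 1 :=
            (Finset.card_image_le).trans (by rw [Finset.card_range])
          exact_mod_cast h1
      _ = 1 / ((n:ℝ) + 1) := by
          rw [sq]
          field_simp
  -- the pairing bound
  have hpair : ∀ n, (2 * ∑' x, (∑' y, u x y) * f n x) ^ 2
      ≤ (∑' p : V × V, (u p.1 p.2) ^ 2) * (1 / ((n:ℝ) + 1)) :=
    fun n => parts_cs G u hanti hsupp hE (f n) _ (hfs n) _ (hDir n)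
  -- convergence of the pairing to the total influx
  have htend : Filter.Tendsto (fun n => ∑' x, (∑' y, u x y) * f n x)
      Filter.atTop (nhds (∑' x, ∑' y, u x y)) := by
    have := tendsto_tsum_of_dominated_convergence (𝓕 := Filter.atTop)
      (f := fun n x => (∑' y, u x y) * f n x) (g := fun x => ∑' y, u x y)
      (bound := fun x => |∑' y, u x y|) hdivsum.abs ?_ ?_
    · exact this
    · intro x
      obtain ⟨m, hm⟩ := he x
      have hev : ∀ n ≥ m, (∑' y, u x y) * f n x = ∑' y, u x y := by
        intro n hn
        have hx : x ∈ An n := Finset.mem_image.2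
          ⟨m, Finset.mem_range.2 (Nat.lt_succ_of_le hn), hm⟩
        rw [hf_one n x hx, mul_one]
      exact tendsto_atTop_of_eventually_const hev
    · filter_upwards with n x
      rw [Real.norm_eq_abs, abs_mul]
      calc |∑' y, u x y| * |f n x| ≤ |∑' y, u x y| * 1 := by
            apply mul_le_mul_of_nonneg_left _ (abs_nonneg _)
            rw [abs_le]
            exact ⟨by linarith [hf_nonneg n x], hf_le_one n x⟩
        _ = |∑' y, u x y| := mul_one _
  -- final contradiction
  have hsq : Filter.Tendsto (fun n => (2 * ∑' x, (∑' y, u x y) * f n x) ^ 2)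
      Filter.atTop (nhds ((2 * ∑' x, ∑' y, u x y) ^ 2)) :=
    ((htend.const_mul 2).pow 2)
  have hzero : Filter.Tendsto (fun n : ℕ => (∑' p : V × V, (u p.1 p.2) ^ 2) * (1 / ((n:ℝ) + 1)))
      Filter.atTop (nhds 0) := by
    have h1 : Filter.Tendsto (fun n : ℕ => 1 / ((n:ℝ) + 1)) Filter.atTop (nhds 0) :=
      tendsto_one_div_add_atTop_nhds_zero_nat
    simpa using h1.const_mul (∑' p : V × V, (u p.1 p.2) ^ 2)
  have hle : (2 * ∑' x, ∑' y, u x y) ^ 2 ≤ 0 :=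
    le_of_tendsto_of_tendsto' hsq hzero (fun n => hpair n)
  have : (∑' x, ∑' y, u x y) = 0 := by nlinarith [sq_nonneg (2 * ∑' x, ∑' y, u x y)]
  exact hL this

end LyonsAux

/-- The simple random walk on a countable, connected, simple graph `G` all of whose vertices
have finite degree is transient (i.e. for every vertex `o`, the expected number of visits to
`o`, `∑_t p_t(o,o)`, is finite) if and only if there is a flow `u` on `G` with absolutely
summable influxes, nonzero total influx, and finite energy. -/
theorem transient_iff_finite_energy_flow {V : Type} [Countable V] [DecidableEq V]
    (G : SimpleGraph V) [∀ v, Fintype (G.neighborSet v)] (hconn : G.Connected) :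
    (∀ o : V, Summable fun t => srwP G t o o) ↔
    ∃ u : V → V → ℝ,
      ((∀ x y, u y x = -u x y) ∧ (∀ x y, u x y ≠ 0 → G.Adj x y)) ∧
      (Summable (fun x => ∑' y, u x y) ∧ (∑' x, ∑' y, u x y) ≠ 0) ∧
      Summable (fun p : V × V => (u p.1 p.2) ^ 2) := by
  letI : DecidableRel G.Adj := Classical.decRel _
  constructor
  · exact fun h => LyonsAux.forward G hconn h
  · rintro ⟨u, ⟨hanti, hsupp⟩, ⟨hdivsum, hL⟩, hE⟩
    exact LyonsAux.backward G hconn u hanti hsupp hdivsum hL hE
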